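/- arXiv:2001.10332 — 3 statements merged into one kernel-verified Lean document; each statement's English description precedes it below -/
import Mathlib

section
/- Let 0 < s < 1/2 and let A ⊆ ℝ^d be a bounded measurable set. Then the Gagliardo seminorm squared [1_A]_{H^s}^2 = ∫∫ |1_A(x)-1_A(y)|²/|x-y|^{d+2s} dx dy satisfies [1_A]_{H^s}^2 ≤ C(d,s)·|A|^{1-2s}, provided the measure m(τ) := μ{(x,y) : x∈A, y∉A, |x-y|<τ} satisfies m(τ) ≤ C·τ^{d+1} for all τ>0 (which holds when ∂A is C²). -/
open MeasureTheory Set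

lemma lint_Ioc_rpow {r t0 : ℝ} (hr : -1 < r) (ht0 : 0 < t0) :
    ∫⁻ t in Ioc 0 t0, ENNReal.ofReal (t ^ r) = ENNReal.ofReal (t0 ^ (r + 1) / (r + 1)) := by
  have hint : IntervalIntegrable (fun x : ℝ => x ^ r) volume 0 t0 :=
    intervalIntegral.intervalIntegrable_rpow' hr
  have hnn : 0 ≤ᶠ[ae (volume.restrict (Ioc 0 t0))] fun t : ℝ => t ^ r := by
    filter_upwards [ae_restrict_mem measurableSet_Ioc] with t ht
    exact Real.rpow_nonneg ht.1.le r
  rw [← ofReal_integral_eq_lintegral_ofReal hint.1 hnn]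
  congr 1
  rw [← intervalIntegral.integral_of_le ht0.le, integral_rpow (Or.inl hr),
    Real.zero_rpow (by linarith), sub_zero]

lemma lint_Ioi_rpow {r t0 : ℝ} (hr : r < -1) (ht0 : 0 < t0) :
    ∫⁻ t in Ioi t0, ENNReal.ofReal (t ^ r) = ENNReal.ofReal (-t0 ^ (r + 1) / (r + 1)) := by
  have hint := integrableOn_Ioi_rpow_of_lt hr ht0
  have hnn : 0 ≤ᶠ[ae (volume.restrict (Ioi t0))] fun t : ℝ => t ^ r := by
    filter_upwards [ae_restrict_mem measurableSet_Ioi] with t ht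
    exact Real.rpow_nonneg (ht0.trans ht).le r
  rw [← ofReal_integral_eq_lintegral_ofReal hint hnn]
  congr 1
  exact integral_Ioi_rpow_of_lt hr ht0

lemma lint_min_bound {β γ a b : ℝ} (hβ0 : 0 < β) (hβ1 : β < 1) (hγ : 1 < γ)
    (ha : 0 < a) (hb : 0 < b) :
    ∫⁻ t in Ioi (0:ℝ), min (ENNReal.ofReal (b * t ^ (-γ))) (ENNReal.ofReal (a * t ^ (-β)))
      ≤ ENNReal.ofReal ((1/(1-β) + 1/(γ-1)) *
          (a ^ ((γ-1)/(γ-β)) * b ^ ((1-β)/(γ-β)))) := by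
  have hγβ : 0 < γ - β := by linarith
  have hba : (0:ℝ) < b / a := div_pos hb ha
  set t0 : ℝ := (b / a) ^ ((γ - β)⁻¹) with ht0def
  have ht0 : 0 < t0 := Real.rpow_pos_of_pos hba _
  set M : ℝ := a ^ ((γ-1)/(γ-β)) * b ^ ((1-β)/(γ-β)) with hMdef
  have hM1 : a * t0 ^ (1 - β) = M := by
    have h1 : t0 ^ (1 - β) = b ^ ((1-β)/(γ-β)) / a ^ ((1-β)/(γ-β)) := by
      rw [ht0def, ← Real.rpow_mul hba.le,
        show (γ-β)⁻¹ * (1-β) = (1-β)/(γ-β) by ring,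
        Real.div_rpow hb.le ha.le]
    have he : (γ-1)/(γ-β) = 1 - (1-β)/(γ-β) := by field_simp; ring
    rw [h1, hMdef, he, Real.rpow_sub ha, Real.rpow_one]
    field_simp
  have hM2 : b * t0 ^ (1 - γ) = M := by
    have h1 : t0 ^ (1 - γ) = a ^ ((γ-1)/(γ-β)) / b ^ ((γ-1)/(γ-β)) := by
      rw [ht0def, ← Real.rpow_mul hba.le,
        show (γ-β)⁻¹ * (1-γ) = -((γ-1)/(γ-β)) by ring,
        Real.rpow_neg hba.le, Real.div_rpow hb.le ha.le, inv_div]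
    have he : (1-β)/(γ-β) = 1 - (γ-1)/(γ-β) := by field_simp; ring
    rw [h1, hMdef, he, Real.rpow_sub hb, Real.rpow_one]
    field_simp
  have hsplit : (Ioi (0:ℝ)) = Ioc 0 t0 ∪ Ioi t0 := (Ioc_union_Ioi_eq_Ioi ht0.le).symm
  rw [hsplit, lintegral_union measurableSet_Ioi (Ioc_disjoint_Ioi le_rfl)]
  have hI1 : ∫⁻ t in Ioc (0:ℝ) t0,
      min (ENNReal.ofReal (b * t ^ (-γ))) (ENNReal.ofReal (a * t ^ (-β)))
      ≤ ENNReal.ofReal (a * (t0 ^ (1-β) / (1-β))) := by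
    calc _ ≤ ∫⁻ t in Ioc (0:ℝ) t0, ENNReal.ofReal (a * t ^ (-β)) :=
          lintegral_mono fun t => min_le_right _ _
      _ = ENNReal.ofReal a * ∫⁻ t in Ioc (0:ℝ) t0, ENNReal.ofReal (t ^ (-β)) := by
          simp_rw [ENNReal.ofReal_mul ha.le]
          exact lintegral_const_mul' _ _ ENNReal.ofReal_ne_top
      _ = ENNReal.ofReal (a * (t0 ^ (1-β) / (1-β))) := by
          rw [lint_Ioc_rpow (by linarith) ht0, ← ENNReal.ofReal_mul ha.le,
            show -β + 1 = 1 - β by ring]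
  have hI2 : ∫⁻ t in Ioi t0,
      min (ENNReal.ofReal (b * t ^ (-γ))) (ENNReal.ofReal (a * t ^ (-β)))
      ≤ ENNReal.ofReal (b * (t0 ^ (1-γ) / (γ-1))) := by
    calc _ ≤ ∫⁻ t in Ioi t0, ENNReal.ofReal (b * t ^ (-γ)) :=
          lintegral_mono fun t => min_le_left _ _
      _ = ENNReal.ofReal b * ∫⁻ t in Ioi t0, ENNReal.ofReal (t ^ (-γ)) := by
          simp_rw [ENNReal.ofReal_mul hb.le]
          exact lintegral_const_mul' _ _ ENNReal.ofReal_ne_top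
      _ = ENNReal.ofReal (b * (t0 ^ (1-γ) / (γ-1))) := by
          rw [lint_Ioi_rpow (by linarith) ht0, ← ENNReal.ofReal_mul hb.le,
            show -γ + 1 = 1 - γ by ring, show -t0 ^ (1-γ) / (1-γ) = t0 ^ (1-γ)/(γ-1) by
              rw [show (1-γ) = -(γ-1) by ring, div_neg, neg_div, neg_neg]]
  have h1β : (0:ℝ) < 1 - β := by linarith
  have hγ1 : (0:ℝ) < γ - 1 := by linarith
  refine le_trans (add_le_add hI1 hI2) ?_
  rw [← ENNReal.ofReal_add
    (mul_nonneg ha.le (div_nonneg (Real.rpow_pos_of_pos ht0 _).le h1β.le))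
    (mul_nonneg hb.le (div_nonneg (Real.rpow_pos_of_pos ht0 _).le hγ1.le))]
  apply ENNReal.ofReal_le_ofReal
  have e1 : a * (t0 ^ (1-β) / (1-β)) = M / (1-β) := by rw [← hM1]; ring
  have e2 : b * (t0 ^ (1-γ) / (γ-1)) = M / (γ-1) := by rw [← hM2]; ring
  rw [e1, e2]
  apply le_of_eq
  field_simp

theorem stmt1 (d : ℕ) (hd : 1 ≤ d) (s C : ℝ) (hs0 : 0 < s) (hs : s < 1/2) (hC : 0 < C) :
    ∃ C' > 0, ∀ A : Set (EuclideanSpace ℝ (Fin d)),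
      MeasurableSet A → Bornology.IsBounded A →
      0 < volume A → volume A < ⊤ →
      (∀ τ > 0,
        (volume : Measure (EuclideanSpace ℝ (Fin d) × EuclideanSpace ℝ (Fin d)))
          {p | p.1 ∈ A ∧ p.2 ∉ A ∧ dist p.1 p.2 < τ} ≤ ENNReal.ofReal (C * τ ^ ((d : ℝ) + 1))) →
      (∫⁻ x, ∫⁻ y, ENNReal.ofReal
          (|Set.indicator A (fun _ => (1:ℝ)) x - Set.indicator A (fun _ => (1:ℝ)) y| ^ 2
            / dist x y ^ ((d : ℝ) + 2 * s)))
        ≤ ENNReal.ofReal (C' * (volume A).toReal ^ (1 - 2 * s)) := by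
  haveI : Nonempty (Fin d) := Fin.pos_iff_nonempty.mp hd
  have hd1 : (1:ℝ) ≤ (d:ℝ) := by exact_mod_cast hd
  set α : ℝ := (d:ℝ) + 2 * s with hαdef
  have hα0 : (0:ℝ) < α := by rw [hαdef]; linarith
  set β : ℝ := (d:ℝ) / α with hβdef
  set γ : ℝ := ((d:ℝ) + 1) / α with hγdef
  have hβ0 : 0 < β := div_pos (by linarith) hα0
  have hβ1 : β < 1 := (div_lt_one hα0).mpr (by rw [hαdef]; linarith)
  have hγ : 1 < γ := (one_lt_div hα0).mpr (by rw [hαdef]; linarith)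
  set B : ENNReal := volume (Metric.ball (0 : EuclideanSpace ℝ (Fin d)) 1) with hBdef
  have hB0 : 0 < B := Metric.measure_ball_pos _ _ one_pos
  have hBtop : B < ⊤ := measure_ball_lt_top
  set κ : ℝ := B.toReal with hκdef
  have hκ0 : 0 < κ := ENNReal.toReal_pos hB0.ne' hBtop.ne
  have hBeq : B = ENNReal.ofReal κ := (ENNReal.ofReal_toReal hBtop.ne).symm
  have hs2 : (0:ℝ) < 1 - 2*s := by linarith
  refine ⟨(1/(1-β) + 1/(γ-1)) * ((2*κ) ^ (1-2*s) * (2*C) ^ (2*s)), ?_, ?_⟩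
  · exact mul_pos
      (add_pos (one_div_pos.mpr (by linarith)) (one_div_pos.mpr (by linarith)))
      (mul_pos (Real.rpow_pos_of_pos (by linarith) _) (Real.rpow_pos_of_pos (by linarith) _))
  intro A hA _hbd hA0 hAtop hm
  set vA : ℝ := (volume A).toReal with hvAdef
  have hvA0 : 0 < vA := ENNReal.toReal_pos hA0.ne' hAtop.ne
  have hvAeq : volume A = ENNReal.ofReal vA := (ENNReal.ofReal_toReal hAtop.ne).symm
  set f : (EuclideanSpace ℝ (Fin d)) × (EuclideanSpace ℝ (Fin d)) → ℝ := fun p =>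
    |Set.indicator A (fun _ => (1:ℝ)) p.1 - Set.indicator A (fun _ => (1:ℝ)) p.2| ^ 2
      / dist p.1 p.2 ^ α with hfdef
  have mInd : Measurable (Set.indicator A (fun _ => (1:ℝ))) := measurable_const.indicator hA
  have hfm : Measurable f :=
    (((mInd.comp measurable_fst).sub (mInd.comp measurable_snd)).abs.pow_const 2).div
      (measurable_dist.pow_const α)
  have hfnn : ∀ p, 0 ≤ f p := fun p =>
    div_nonneg (pow_nonneg (abs_nonneg _) 2) (Real.rpow_nonneg dist_nonneg _)
  have key : ∀ t ∈ Ioi (0:ℝ),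
      (volume : Measure ((EuclideanSpace ℝ (Fin d)) × (EuclideanSpace ℝ (Fin d))))
        {p | t < f p}
      ≤ min (ENNReal.ofReal ((2*C) * t ^ (-γ))) (ENNReal.ofReal ((2*(vA*κ)) * t ^ (-β))) := by
    intro t ht
    rw [mem_Ioi] at ht
    set τ : ℝ := t ^ (-α⁻¹) with hτdef
    have hτ0 : 0 < τ := Real.rpow_pos_of_pos ht _
    have hτα : τ ^ α = t⁻¹ := by
      rw [hτdef, ← Real.rpow_mul ht.le, neg_mul, inv_mul_cancel₀ hα0.ne', Real.rpow_neg_one]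
    set S : Set ((EuclideanSpace ℝ (Fin d)) × (EuclideanSpace ℝ (Fin d))) :=
      {p | p.1 ∈ A ∧ p.2 ∉ A ∧ dist p.1 p.2 < τ} with hSdef
    set S' : Set ((EuclideanSpace ℝ (Fin d)) × (EuclideanSpace ℝ (Fin d))) :=
      {p | p.2 ∈ A ∧ p.1 ∉ A ∧ dist p.1 p.2 < τ} with hS'def
    have hsub : {p | t < f p} ⊆ S ∪ S' := by
      rintro ⟨x, y⟩ hp
      simp only [mem_setOf_eq] at hp
      have hcase : (x ∈ A ∧ y ∉ A) ∨ (y ∈ A ∧ x ∉ A) := by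
        by_cases h1 : x ∈ A <;> by_cases h2 : y ∈ A
        · exfalso
          have h0 : f (x, y) = 0 := by
            simp [hfdef, Set.indicator_of_mem h1, Set.indicator_of_mem h2]
          rw [h0] at hp; linarith
        · exact Or.inl ⟨h1, h2⟩
        · exact Or.inr ⟨h2, h1⟩
        · exfalso
          have h0 : f (x, y) = 0 := by
            simp [hfdef, Set.indicator_of_notMem h1, Set.indicator_of_notMem h2]
          rw [h0] at hp; linarith
      have hfp : f (x, y) = (dist x y ^ α)⁻¹ := by
        rcases hcase with ⟨h1, h2⟩ | ⟨h1, h2⟩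
        · simp [hfdef, Set.indicator_of_mem h1, Set.indicator_of_notMem h2, one_div]
        · simp [hfdef, Set.indicator_of_mem h1, Set.indicator_of_notMem h2, one_div]
      have hDα0 : 0 < dist x y ^ α := by
        rcases (Real.rpow_nonneg (dist_nonneg : (0:ℝ) ≤ dist x y) α).lt_or_eq with h | h
        · exact h
        · exfalso; rw [hfp, ← h] at hp; simp at hp; linarith
      have hdlt : dist x y < τ := by
        have h2 : dist x y ^ α < t⁻¹ := by
          rw [hfp] at hp
          exact (lt_inv_comm₀ ht hDα0).mp hp
        rw [← hτα] at h2
        exact (Real.rpow_lt_rpow_iff dist_nonneg hτ0.le hα0).mp h2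
      rcases hcase with ⟨h1, h2⟩ | ⟨h1, h2⟩
      · exact Or.inl ⟨h1, h2, hdlt⟩
      · exact Or.inr ⟨h1, h2, hdlt⟩
    have hdistm : MeasurableSet
        {p : (EuclideanSpace ℝ (Fin d)) × (EuclideanSpace ℝ (Fin d)) | dist p.1 p.2 < τ} :=
      measurableSet_lt measurable_dist measurable_const
    have hS : MeasurableSet S := by
      have hrw : S = (A ×ˢ Aᶜ) ∩
          {p : (EuclideanSpace ℝ (Fin d)) × (EuclideanSpace ℝ (Fin d)) | dist p.1 p.2 < τ} := by
        ext p; simp [hSdef, Set.mem_prod, and_assoc]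
      rw [hrw]
      exact (hA.prod hA.compl).inter hdistm
    have hswap : (volume : Measure ((EuclideanSpace ℝ (Fin d)) × (EuclideanSpace ℝ (Fin d)))) S'
        = volume S := by
      have hrw : S' = Prod.swap ⁻¹' S := by
        ext p
        simp only [hSdef, hS'def, mem_setOf_eq, Set.mem_preimage, Prod.fst_swap, Prod.snd_swap]
        rw [dist_comm]
      rw [hrw, Measure.volume_eq_prod, ← Measure.map_apply measurable_swap hS, Measure.prod_swap]
    have hSC : volume S ≤ ENNReal.ofReal (C * τ ^ ((d:ℝ)+1)) := hm τ hτ0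
    have hτd1 : τ ^ ((d:ℝ)+1) = t ^ (-γ) := by
      rw [hτdef, ← Real.rpow_mul ht.le,
        show -α⁻¹ * ((d:ℝ)+1) = -γ from by rw [hγdef]; ring]
    have hτd : τ ^ d = t ^ (-β) := by
      rw [← Real.rpow_natCast τ d, hτdef, ← Real.rpow_mul ht.le,
        show -α⁻¹ * (d:ℝ) = -β from by rw [hβdef]; ring]
    have hboundC : volume {p | t < f p} ≤ ENNReal.ofReal ((2*C) * t ^ (-γ)) := by
      refine le_trans (measure_mono hsub) (le_trans (measure_union_le S S') ?_)
      rw [hswap]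
      have treal : C * τ ^ ((d:ℝ)+1) + C * τ ^ ((d:ℝ)+1) = (2*C) * t ^ (-γ) := by
        rw [hτd1]; ring
      calc volume S + volume S
          ≤ ENNReal.ofReal (C * τ ^ ((d:ℝ)+1)) + ENNReal.ofReal (C * τ ^ ((d:ℝ)+1)) :=
            add_le_add hSC hSC
        _ = ENNReal.ofReal ((2*C) * t ^ (-γ)) := by
            rw [← ENNReal.ofReal_add
              (mul_nonneg hC.le (Real.rpow_nonneg hτ0.le _))
              (mul_nonneg hC.le (Real.rpow_nonneg hτ0.le _)), treal]
    have hT1 : volume {p : (EuclideanSpace ℝ (Fin d)) × (EuclideanSpace ℝ (Fin d)) |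
        p.1 ∈ A ∧ dist p.1 p.2 < τ} ≤ ENNReal.ofReal (vA * κ * t ^ (-β)) := by
      have hmT1 : MeasurableSet {p : (EuclideanSpace ℝ (Fin d)) × (EuclideanSpace ℝ (Fin d)) |
          p.1 ∈ A ∧ dist p.1 p.2 < τ} := (measurable_fst hA).inter hdistm
      rw [Measure.volume_eq_prod, Measure.prod_apply hmT1]
      have hb : ∀ x, volume (Prod.mk x ⁻¹' {p : (EuclideanSpace ℝ (Fin d)) × (EuclideanSpace ℝ (Fin d)) |
          p.1 ∈ A ∧ dist p.1 p.2 < τ})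
          ≤ Set.indicator A (fun _ => ENNReal.ofReal (τ ^ d) * B) x := by
        intro x
        by_cases hx : x ∈ A
        · rw [Set.indicator_of_mem hx]
          have hpre : Prod.mk x ⁻¹' {p : (EuclideanSpace ℝ (Fin d)) × (EuclideanSpace ℝ (Fin d)) |
              p.1 ∈ A ∧ dist p.1 p.2 < τ} = Metric.ball x τ := by
            ext y; simp [hx, Metric.mem_ball, dist_comm]
          rw [hpre, hBdef, Measure.addHaar_ball volume x hτ0.le, finrank_euclideanSpace_fin]
        · rw [Set.indicator_of_notMem hx]
          have hpre : Prod.mk x ⁻¹' {p : (EuclideanSpace ℝ (Fin d)) × (EuclideanSpace ℝ (Fin d)) |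
              p.1 ∈ A ∧ dist p.1 p.2 < τ} = ∅ := by
            ext y; simp [hx]
          simp [hpre]
      refine le_trans (lintegral_mono hb) ?_
      rw [lintegral_indicator_const hA, hvAeq, hBeq,
        ← ENNReal.ofReal_mul (pow_nonneg hτ0.le d),
        ← ENNReal.ofReal_mul (mul_nonneg (pow_nonneg hτ0.le d) hκ0.le)]
      exact ENNReal.ofReal_le_ofReal (le_of_eq (by rw [hτd]; ring))
    have hT2 : volume {p : (EuclideanSpace ℝ (Fin d)) × (EuclideanSpace ℝ (Fin d)) |
        p.2 ∈ A ∧ dist p.1 p.2 < τ} ≤ ENNReal.ofReal (vA * κ * t ^ (-β)) := by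
      have hmT2 : MeasurableSet {p : (EuclideanSpace ℝ (Fin d)) × (EuclideanSpace ℝ (Fin d)) |
          p.2 ∈ A ∧ dist p.1 p.2 < τ} := (measurable_snd hA).inter hdistm
      rw [Measure.volume_eq_prod, Measure.prod_apply_symm hmT2]
      have hb : ∀ y, volume ((fun x => (x, y)) ⁻¹' {p : (EuclideanSpace ℝ (Fin d)) × (EuclideanSpace ℝ (Fin d)) |
          p.2 ∈ A ∧ dist p.1 p.2 < τ})
          ≤ Set.indicator A (fun _ => ENNReal.ofReal (τ ^ d) * B) y := by
        intro y
        by_cases hy : y ∈ A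
        · rw [Set.indicator_of_mem hy]
          have hpre : (fun x => (x, y)) ⁻¹' {p : (EuclideanSpace ℝ (Fin d)) × (EuclideanSpace ℝ (Fin d)) |
              p.2 ∈ A ∧ dist p.1 p.2 < τ} = Metric.ball y τ := by
            ext x; simp [hy, Metric.mem_ball]
          rw [hpre, hBdef, Measure.addHaar_ball volume y hτ0.le, finrank_euclideanSpace_fin]
        · rw [Set.indicator_of_notMem hy]
          have hpre : (fun x => (x, y)) ⁻¹' {p : (EuclideanSpace ℝ (Fin d)) × (EuclideanSpace ℝ (Fin d)) |
              p.2 ∈ A ∧ dist p.1 p.2 < τ} = ∅ := by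
            ext x; simp [hy]
          simp [hpre]
      refine le_trans (lintegral_mono hb) ?_
      rw [lintegral_indicator_const hA, hvAeq, hBeq,
        ← ENNReal.ofReal_mul (pow_nonneg hτ0.le d),
        ← ENNReal.ofReal_mul (mul_nonneg (pow_nonneg hτ0.le d) hκ0.le)]
      exact ENNReal.ofReal_le_ofReal (le_of_eq (by rw [hτd]; ring))
    have hboundV : volume {p | t < f p} ≤ ENNReal.ofReal ((2*(vA*κ)) * t ^ (-β)) := by
      refine le_trans (measure_mono hsub) (le_trans (measure_union_le S S') ?_)
      have h1 : volume S ≤ ENNReal.ofReal (vA * κ * t ^ (-β)) :=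
        le_trans (measure_mono fun p (hp : p ∈ S) =>
          show p.1 ∈ A ∧ dist p.1 p.2 < τ from ⟨hp.1, hp.2.2⟩) hT1
      have h2 : volume S' ≤ ENNReal.ofReal (vA * κ * t ^ (-β)) :=
        le_trans (measure_mono fun p (hp : p ∈ S') =>
          show p.2 ∈ A ∧ dist p.1 p.2 < τ from ⟨hp.1, hp.2.2⟩) hT2
      refine le_trans (add_le_add h1 h2) ?_
      rw [← ENNReal.ofReal_add
        (mul_nonneg (mul_nonneg hvA0.le hκ0.le) (Real.rpow_nonneg ht.le _))
        (mul_nonneg (mul_nonneg hvA0.le hκ0.le) (Real.rpow_nonneg ht.le _))]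
      exact ENNReal.ofReal_le_ofReal (le_of_eq (by ring))
    exact le_min hboundC hboundV
  -- exponent identities
  have hγβ' : γ - β = 1/α := by
    rw [hγdef, hβdef, div_sub_div_same]; congr 1; ring
  have he1 : (γ-1)/(γ-β) = 1-2*s := by
    rw [hγβ', hγdef, hαdef]
    field_simp
    ring
  have he2 : (1-β)/(γ-β) = 2*s := by
    rw [hγβ', hβdef, hαdef]
    field_simp
    ring
  have main : (∫⁻ x, ∫⁻ y, ENNReal.ofReal (f (x, y)))
      ≤ ENNReal.ofReal ((1/(1-β) + 1/(γ-1)) * ((2*κ) ^ (1-2*s) * (2*C) ^ (2*s))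
          * vA ^ (1-2*s)) := by
    calc (∫⁻ x, ∫⁻ y, ENNReal.ofReal (f (x, y)))
        = ∫⁻ p, ENNReal.ofReal (f p)
            ∂((volume : Measure (EuclideanSpace ℝ (Fin d))).prod volume) :=
          lintegral_lintegral ((ENNReal.measurable_ofReal.comp hfm).aemeasurable)
      _ = ∫⁻ t in Ioi (0:ℝ),
            ((volume : Measure (EuclideanSpace ℝ (Fin d))).prod volume) {p | t < f p} :=
          lintegral_eq_lintegral_meas_lt _ (Filter.Eventually.of_forall hfnn) hfm.aemeasurable
      _ = ∫⁻ t in Ioi (0:ℝ),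
            (volume : Measure ((EuclideanSpace ℝ (Fin d)) × (EuclideanSpace ℝ (Fin d))))
              {p | t < f p} := by rw [← Measure.volume_eq_prod]
      _ ≤ ∫⁻ t in Ioi (0:ℝ),
            min (ENNReal.ofReal ((2*C) * t ^ (-γ))) (ENNReal.ofReal ((2*(vA*κ)) * t ^ (-β))) :=
          setLIntegral_mono' measurableSet_Ioi key
      _ ≤ ENNReal.ofReal ((1/(1-β) + 1/(γ-1)) *
            ((2*(vA*κ)) ^ ((γ-1)/(γ-β)) * (2*C) ^ ((1-β)/(γ-β)))) :=
          lint_min_bound hβ0 hβ1 hγ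
            (mul_pos two_pos (mul_pos hvA0 hκ0)) (mul_pos two_pos hC)
      _ ≤ ENNReal.ofReal ((1/(1-β) + 1/(γ-1)) * ((2*κ) ^ (1-2*s) * (2*C) ^ (2*s))
            * vA ^ (1-2*s)) := by
          apply ENNReal.ofReal_le_ofReal
          apply le_of_eq
          rw [he1, he2, show 2*(vA*κ) = (2*κ)*vA from by ring,
            Real.mul_rpow (by linarith) hvA0.le]
          ring
  exact main
end

section
/- For α ∈ (0,1) and τ > 0, define the improper integral J(τ) = ∫_{-σ₀}^{σ₀} (σ² + τ²)^{-(1+α)/2} dσ for fixed σ₀ > 0. Then J(τ) = C_α τ^{-α} − 2/(α σ₀^α) + O(τ²) as τ → 0⁺, where C_α = ∫_ℝ (σ²+1)^{-(1+α)/2} dσ is finite. -/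
open MeasureTheory Set Real

lemma aux_sq_rpow {σ : ℝ} (hσ : 0 < σ) (e : ℝ) : ((σ ^ 2 : ℝ)) ^ e = σ ^ (2 * e) := by
  rw [← Real.rpow_natCast σ 2, ← Real.rpow_mul hσ.le]
  norm_num

lemma aux_cont {τ : ℝ} (hτ : 0 < τ) (e : ℝ) :
    Continuous (fun σ : ℝ => ((σ ^ 2 + τ ^ 2) ^ e : ℝ)) := by
  apply Continuous.rpow_const (by continuity)
  intro x
  left
  positivity

lemma aux_int_Ioi {α τ c : ℝ} (hα : 0 < α) (hτ : 0 < τ) (hc : 0 < c) :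
    IntegrableOn (fun σ : ℝ => ((σ ^ 2 + τ ^ 2) ^ (-(1 + α) / 2) : ℝ)) (Ioi c) := by
  have hb : IntegrableOn (fun σ : ℝ => σ ^ (-(1 + α))) (Ioi c) :=
    integrableOn_Ioi_rpow_of_lt (by linarith) hc
  apply hb.mono' ((aux_cont hτ _).aestronglyMeasurable.restrict)
  rw [ae_restrict_iff' measurableSet_Ioi]
  refine ae_of_all _ fun σ hσ => ?_
  have hσ0 : 0 < σ := hc.trans hσ
  rw [Real.norm_eq_abs, abs_of_nonneg (Real.rpow_nonneg (by positivity) _)]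
  calc (σ ^ 2 + τ ^ 2 : ℝ) ^ (-(1 + α) / 2) ≤ (σ ^ 2 : ℝ) ^ (-(1 + α) / 2) :=
        Real.rpow_le_rpow_of_nonpos (by positivity) (by nlinarith) (by linarith)
    _ = σ ^ (-(1 + α)) := by rw [aux_sq_rpow hσ0]; congr 1; ring

lemma aux_int {α τ : ℝ} (hα : 0 < α) (hτ : 0 < τ) :
    Integrable (fun σ : ℝ => ((σ ^ 2 + τ ^ 2) ^ (-(1 + α) / 2) : ℝ)) := by
  have h1 : IntegrableOn (fun σ : ℝ => ((σ ^ 2 + τ ^ 2) ^ (-(1 + α) / 2) : ℝ)) (Ioi 1) :=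
    aux_int_Ioi hα hτ one_pos
  have h2 : IntegrableOn (fun σ : ℝ => ((σ ^ 2 + τ ^ 2) ^ (-(1 + α) / 2) : ℝ)) (Icc (-1) 1) :=
    (aux_cont hτ _).integrableOn_Icc
  have h3 : IntegrableOn (fun σ : ℝ => ((σ ^ 2 + τ ^ 2) ^ (-(1 + α) / 2) : ℝ)) (Iic (-1)) := by
    have hme : MeasurableEmbedding (Neg.neg : ℝ → ℝ) :=
      (Homeomorph.neg ℝ).isClosedEmbedding.measurableEmbedding
    have hIci : IntegrableOn (fun σ : ℝ => ((σ ^ 2 + τ ^ 2) ^ (-(1 + α) / 2) : ℝ)) (Ici 1) :=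
      Iff.mpr integrableOn_Ici_iff_integrableOn_Ioi h1
    have hmap : (volume : Measure ℝ).restrict (Iic (-1 : ℝ)) =
        Measure.map (Neg.neg : ℝ → ℝ) ((volume : Measure ℝ).restrict (Ici (1 : ℝ))) := by
      have hpre : ((Neg.neg : ℝ → ℝ) ⁻¹' Iic (-1 : ℝ)) = Ici 1 := by
        ext x
        simp only [Set.mem_preimage, Set.mem_Iic, Set.mem_Ici]
        constructor <;> intro h <;> linarith
      conv_lhs => rw [← Measure.map_neg_eq_self (volume : Measure ℝ)]
      rw [hme.restrict_map, hpre]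
    unfold IntegrableOn
    rw [hmap, hme.integrable_map_iff]
    refine hIci.congr_fun (fun x _ => ?_) measurableSet_Ici
    simp only [Function.comp_apply, neg_sq]
  rw [← integrableOn_univ, ← Iic_union_Ioi (a := (1 : ℝ)),
    ← Iic_union_Icc_eq_Iic (show (-1 : ℝ) ≤ 1 by norm_num)]
  exact (h3.union h2).union h1

lemma aux_pointwise {α τ σ : ℝ} (hα : 0 < α) (hα1 : α < 1) (hτ : 0 < τ) (hσ : 0 < σ) :
    ((σ ^ 2 + τ ^ 2) ^ (-(1 + α) / 2) : ℝ) ≤ σ ^ (-(1 + α)) ∧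
    σ ^ (-(1 + α)) - ((σ ^ 2 + τ ^ 2) ^ (-(1 + α) / 2) : ℝ)
      ≤ (1 + α) / 2 * τ ^ 2 * σ ^ (-(3 + α)) := by
  have hS : ((σ ^ 2 : ℝ)) ^ (-(1 + α) / 2) = σ ^ (-(1 + α)) := by
    rw [aux_sq_rpow hσ]; congr 1; ring
  constructor
  · calc (σ ^ 2 + τ ^ 2 : ℝ) ^ (-(1 + α) / 2) ≤ (σ ^ 2 : ℝ) ^ (-(1 + α) / 2) :=
        Real.rpow_le_rpow_of_nonpos (by positivity) (by nlinarith) (by linarith)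
    _ = σ ^ (-(1 + α)) := hS
  · set p : ℝ := (1 + α) / 2 with hp
    set t : ℝ := τ ^ 2 / σ ^ 2 with htdef
    have ht : 0 < t := by positivity
    have key1 : ((σ ^ 2 + τ ^ 2 : ℝ)) ^ (-(1 + α) / 2)
        = ((σ ^ 2 : ℝ)) ^ (-(1 + α) / 2) * (1 + t) ^ (-(1 + α) / 2) := by
      rw [← Real.mul_rpow (by positivity) (by positivity)]
      congr 1
      rw [htdef]
      field_simp
    have hB : (1 + t) ^ p ≤ 1 + p * t :=
      rpow_one_add_le_one_add_mul_self (by linarith) (by positivity) (by rw [hp]; linarith)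
    have hA : 0 < (1 + t) ^ p := Real.rpow_pos_of_pos (by linarith) _
    have key2 : 1 - p * t ≤ (1 + t) ^ (-(1 + α) / 2) := by
      rw [show (-(1 + α) / 2 : ℝ) = -p by rw [hp]; ring,
        Real.rpow_neg (by linarith : (0:ℝ) ≤ 1 + t)]
      have h1 : 0 < 1 + p * t := by positivity
      have h2 : (1 + p * t)⁻¹ ≤ ((1 + t) ^ p)⁻¹ := by gcongr
      have h3 : 1 - p * t ≤ (1 + p * t)⁻¹ := by
        have h4 := mul_inv_cancel₀ h1.ne'
        nlinarith [sq_nonneg (p * t), inv_nonneg.mpr h1.le]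
      linarith
    have hSpos : 0 < σ ^ (-(1 + α)) := Real.rpow_pos_of_pos hσ _
    have hσ2 : σ ^ ((-2 : ℝ)) = (σ ^ 2)⁻¹ := by
      rw [show ((-2 : ℝ)) = -((2 : ℕ) : ℝ) by norm_num, Real.rpow_neg hσ.le,
        Real.rpow_natCast]
    have hT : t * σ ^ (-(1 + α)) = τ ^ 2 * σ ^ (-(3 + α)) := by
      rw [show (-(3 + α) : ℝ) = (-2 : ℝ) + -(1 + α) by ring, Real.rpow_add hσ, hσ2, htdef]
      ring
    rw [key1, hS]
    have hmul := mul_le_mul_of_nonneg_left key2 hSpos.le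
    rw [mul_assoc, ← hT]
    nlinarith [hmul]

theorem stmt5 (α σ₀ : ℝ) (hα : 0 < α) (hα1 : α < 1) (hσ₀ : 0 < σ₀) :
    ∃ C > 0, ∃ τ₁ > 0, ∀ τ : ℝ, 0 < τ → τ < τ₁ →
      |(∫ σ in (-σ₀)..σ₀, ((σ ^ 2 + τ ^ 2) ^ (-(1 + α) / 2) : ℝ))
        - (∫ σ : ℝ, ((σ ^ 2 + 1) ^ (-(1 + α) / 2) : ℝ)) * τ ^ (-α)
        + 2 / (α * σ₀ ^ α)| ≤ C * τ ^ 2 := by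
  refine ⟨(1 + α) * σ₀ ^ (-(2 + α)), by positivity, 1, one_pos, fun τ hτ hτ1 => ?_⟩
  set f : ℝ → ℝ := fun σ => ((σ ^ 2 + τ ^ 2) ^ (-(1 + α) / 2) : ℝ) with hf
  have hint : Integrable f := aux_int hα hτ
  -- scaling identity
  have hscale : ∫ σ : ℝ, f σ
      = (∫ σ : ℝ, ((σ ^ 2 + 1) ^ (-(1 + α) / 2) : ℝ)) * τ ^ (-α) := by
    have h := MeasureTheory.Measure.integral_comp_mul_left f τ
    simp only [smul_eq_mul] at h
    have key : ∀ x : ℝ, f (τ * x)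
        = (τ ^ 2 : ℝ) ^ (-(1 + α) / 2) * ((x ^ 2 + 1) ^ (-(1 + α) / 2) : ℝ) := by
      intro x
      rw [hf]
      simp only
      rw [← Real.mul_rpow (by positivity) (by positivity)]
      congr 1
      ring
    simp only [key] at h
    rw [MeasureTheory.integral_const_mul, abs_inv, abs_of_pos hτ] at h
    have h2 : τ * (τ ^ 2 : ℝ) ^ (-(1 + α) / 2) = τ ^ (-α) := by
      rw [aux_sq_rpow hτ, ← Real.rpow_one_add' hτ.le (by intro hcon; nlinarith)]
      congr 1
      ring
    have hτ' : τ ≠ 0 := hτ.ne'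
    have : ∫ σ : ℝ, f σ
        = τ * ((τ ^ 2 : ℝ) ^ (-(1 + α) / 2) * ∫ σ : ℝ, ((σ ^ 2 + 1) ^ (-(1 + α) / 2) : ℝ)) := by
      rw [h]
      field_simp
    rw [this, ← mul_assoc, h2, mul_comm]
  -- splitting identity
  have hIic : ∫ σ in Iic (-σ₀), f σ = ∫ σ in Ioi σ₀, f σ := by
    have h := integral_comp_neg_Iic (-σ₀) f
    rw [neg_neg] at h
    rw [← h]
    refine setIntegral_congr_fun measurableSet_Iic fun x _ => ?_
    simp [hf]
  have h_all : (∫ σ in Iic (-σ₀), f σ) + ∫ σ in Ioi (-σ₀), f σ = ∫ σ : ℝ, f σ :=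
    intervalIntegral.integral_Iic_add_Ioi hint.integrableOn hint.integrableOn
  have h_right : ∫ σ in Ioi (-σ₀), f σ
      = (∫ σ in Ioc (-σ₀) σ₀, f σ) + ∫ σ in Ioi σ₀, f σ := by
    rw [← MeasureTheory.setIntegral_union (Ioc_disjoint_Ioi le_rfl) measurableSet_Ioi
      hint.integrableOn hint.integrableOn, Ioc_union_Ioi_eq_Ioi (by linarith)]
  have hIoc : ∫ σ in (-σ₀)..σ₀, f σ = ∫ σ in Ioc (-σ₀) σ₀, f σ :=
    intervalIntegral.integral_of_le (by linarith)
  -- tail values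
  have hσ₀α : (0:ℝ) < σ₀ ^ α := Real.rpow_pos_of_pos hσ₀ α
  have hg_val : ∫ σ in Ioi σ₀, (σ : ℝ) ^ (-(1 + α)) = 1 / (α * σ₀ ^ α) := by
    rw [integral_Ioi_rpow_of_lt (by linarith) hσ₀,
      show (-(1 + α) + 1 : ℝ) = -α by ring, Real.rpow_neg hσ₀.le]
    field_simp
  have hh_val : ∫ σ in Ioi σ₀, (σ : ℝ) ^ (-(3 + α)) = σ₀ ^ (-(2 + α)) / (2 + α) := by
    rw [integral_Ioi_rpow_of_lt (by linarith) hσ₀,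
      show (-(3 + α) + 1 : ℝ) = -(2 + α) by ring, neg_div_neg_eq]
  -- integrability of tails
  have hg_int : IntegrableOn (fun σ : ℝ => σ ^ (-(1 + α))) (Ioi σ₀) :=
    integrableOn_Ioi_rpow_of_lt (by linarith) hσ₀
  have hf_int : IntegrableOn f (Ioi σ₀) := hint.integrableOn
  have hh_int : IntegrableOn (fun σ : ℝ => ((1 + α) / 2 * τ ^ 2) * σ ^ (-(3 + α))) (Ioi σ₀) :=
    (integrableOn_Ioi_rpow_of_lt (by linarith) hσ₀).const_mul _
  -- main rewriting
  have hmain : (∫ σ in (-σ₀)..σ₀, f σ)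
      - (∫ σ : ℝ, ((σ ^ 2 + 1) ^ (-(1 + α) / 2) : ℝ)) * τ ^ (-α) + 2 / (α * σ₀ ^ α)
      = 2 * ∫ σ in Ioi σ₀, ((σ : ℝ) ^ (-(1 + α)) - f σ) := by
    rw [MeasureTheory.integral_sub hg_int hf_int, hg_val, hIoc, ← hscale]
    have h2x : (2:ℝ) / (α * σ₀ ^ α) = 2 * (1 / (α * σ₀ ^ α)) := by ring
    linarith [h_all, h_right, hIic, h2x]
  rw [hmain]
  -- bound
  have hbound : |∫ σ in Ioi σ₀, ((σ : ℝ) ^ (-(1 + α)) - f σ)|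
      ≤ ∫ σ in Ioi σ₀, ((1 + α) / 2 * τ ^ 2) * σ ^ (-(3 + α)) := by
    rw [← Real.norm_eq_abs]
    refine MeasureTheory.norm_integral_le_of_norm_le hh_int ?_
    rw [ae_restrict_iff' measurableSet_Ioi]
    refine ae_of_all _ fun σ hσ => ?_
    have hσ0 : 0 < σ := hσ₀.trans hσ
    obtain ⟨hle, hdiff⟩ := aux_pointwise hα hα1 hτ hσ0
    rw [Real.norm_eq_abs, abs_of_nonneg (by linarith)]
    calc σ ^ (-(1 + α)) - f σ ≤ (1 + α) / 2 * τ ^ 2 * σ ^ (-(3 + α)) := hdiff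
      _ = ((1 + α) / 2 * τ ^ 2) * σ ^ (-(3 + α)) := by ring
  have hval : ∫ σ in Ioi σ₀, ((1 + α) / 2 * τ ^ 2) * σ ^ (-(3 + α))
      = ((1 + α) / 2 * τ ^ 2) * (σ₀ ^ (-(2 + α)) / (2 + α)) := by
    rw [MeasureTheory.integral_const_mul, hh_val]
  rw [hval] at hbound
  have hX : (0:ℝ) < σ₀ ^ (-(2 + α)) := Real.rpow_pos_of_pos hσ₀ _
  have hdivle : σ₀ ^ (-(2 + α)) / (2 + α) ≤ σ₀ ^ (-(2 + α)) :=
    div_le_self hX.le (by linarith)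
  have hfinal := mul_le_mul_of_nonneg_left hdivle
    (show (0:ℝ) ≤ (1 + α) * τ ^ 2 by positivity)
  calc |2 * ∫ σ in Ioi σ₀, ((σ : ℝ) ^ (-(1 + α)) - f σ)|
      = 2 * |∫ σ in Ioi σ₀, ((σ : ℝ) ^ (-(1 + α)) - f σ)| := by
        rw [abs_mul, abs_two]
    _ ≤ 2 * (((1 + α) / 2 * τ ^ 2) * (σ₀ ^ (-(2 + α)) / (2 + α))) := by linarith
    _ ≤ (1 + α) * σ₀ ^ (-(2 + α)) * τ ^ 2 := by nlinarith [hfinal]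
end

section
/- Let α ∈ (0,1), σ₀ > 0, and let b : [-σ₀,σ₀] → ℝ be C² with b(0) = 0 and b'(0) = 0 (e.g. b(σ) = ā(σ) − ā(0) − ā'(0)σ). Then the integral R(τ) := ∫_{-σ₀}^{σ₀} b(σ)·[ (σ²+τ²)^{-(1+α)/2} − |σ|^{-(1+α)} ] dσ satisfies |R(τ)| ≤ C‖b''‖_∞ τ^{2-α} for all sufficiently small τ > 0. -/
open MeasureTheory intervalIntegral Set

lemma stmt9_quad (M : ℝ) (b : ℝ → ℝ) (hb : ContDiff ℝ 2 b) (hb0 : b 0 = 0)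
    (hb'0 : deriv b 0 = 0) (hbM : ∀ x, |deriv (deriv b) x| ≤ M) :
    ∀ x : ℝ, |b x| ≤ M * x ^ 2 := by
  have hb2 : ContDiff ℝ (1 + 1) b := by norm_num; exact hb
  have h1 : ContDiff ℝ 1 (deriv b) := (contDiff_succ_iff_deriv.mp hb2).2.2
  have hd1 : Differentiable ℝ b := hb.differentiable (by norm_num)
  have hd2 : Differentiable ℝ (deriv b) := h1.differentiable (by norm_num)
  have step1 : ∀ x : ℝ, |deriv b x| ≤ M * |x| := by
    intro x
    have := Convex.norm_image_sub_le_of_norm_deriv_le (f := deriv b) (s := Set.univ) (C := M)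
      (fun y _ => hd2 y) (fun y _ => by simpa [Real.norm_eq_abs] using hbM y)
      convex_univ (Set.mem_univ 0) (Set.mem_univ x)
    simpa [hb'0, Real.norm_eq_abs] using this
  intro x
  have step2 := Convex.norm_image_sub_le_of_norm_deriv_le (f := b) (s := Set.uIcc 0 x) (C := M * |x|)
    (fun y _ => hd1 y)
    (fun y hy => by
      have hyx : |y| ≤ |x| := by
        rcases Set.mem_uIcc.mp hy with ⟨h1, h2⟩ | ⟨h1, h2⟩
        · rw [abs_of_nonneg h1, abs_of_nonneg (le_trans h1 h2)]; exact h2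
        · rw [abs_of_nonpos h2, abs_of_nonpos (le_trans h1 h2)]; linarith
      calc ‖deriv b y‖ ≤ M * |y| := step1 y
        _ ≤ M * |x| := mul_le_mul_of_nonneg_left hyx (le_trans (abs_nonneg _) (hbM 0)))
    (convex_uIcc 0 x) (Set.left_mem_uIcc) (Set.right_mem_uIcc)
  calc |b x| = ‖b x - b 0‖ := by simp [hb0]
    _ ≤ M * |x| * ‖x - 0‖ := step2
    _ = M * x ^ 2 := by rw [Real.norm_eq_abs, sub_zero, mul_assoc, ← abs_mul, ← sq, abs_sq]


lemma stmt9_key (α τ σ₀ M : ℝ) (hα : 0 < α) (hα1 : α < 1) (hτ : 0 < τ) (hτσ : τ < σ₀)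
    (hM : 0 ≤ M) (c : ℝ → ℝ) (hc : Continuous c) (hcq : ∀ x, |c x| ≤ M * x ^ 2) :
    IntervalIntegrable
      (fun σ => c σ * (((σ ^ 2 + τ ^ 2) ^ (-(1 + α) / 2) : ℝ) - |σ| ^ (-(1 + α))))
      volume 0 σ₀ ∧
    |∫ σ in (0:ℝ)..σ₀, c σ * (((σ ^ 2 + τ ^ 2) ^ (-(1 + α) / 2) : ℝ) - |σ| ^ (-(1 + α)))|
      ≤ (1 + 1/α) * M * τ ^ (2 - α) := by
  set f : ℝ → ℝ :=
    fun σ => c σ * (((σ ^ 2 + τ ^ 2) ^ (-(1 + α) / 2) : ℝ) - |σ| ^ (-(1 + α))) with hf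
  have hσ₀0 : (0:ℝ) < σ₀ := hτ.trans hτσ
  -- (σ^2)^x = σ^(2x)
  have Egen : ∀ σ : ℝ, 0 < σ → ∀ x : ℝ, ((σ ^ 2 : ℝ)) ^ x = σ ^ (2 * x) := by
    intro σ hσ x
    rw [← Real.rpow_natCast σ 2, ← Real.rpow_mul hσ.le]
    norm_num
  -- kernel between 0 and σ^(-(1+α))
  have hK : ∀ σ : ℝ, 0 < σ →
      0 ≤ ((σ ^ 2 + τ ^ 2) ^ (-(1 + α) / 2) : ℝ) ∧
      ((σ ^ 2 + τ ^ 2) ^ (-(1 + α) / 2) : ℝ) ≤ σ ^ (-(1 + α)) := by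
    intro σ hσ
    constructor
    · positivity
    · have h := Real.rpow_le_rpow_of_nonpos (by positivity : (0:ℝ) < σ ^ 2)
        (by nlinarith : (σ ^ 2 : ℝ) ≤ σ ^ 2 + τ ^ 2) (by linarith : -(1 + α) / 2 ≤ 0)
      calc ((σ ^ 2 + τ ^ 2) ^ (-(1 + α) / 2) : ℝ) ≤ (σ ^ 2) ^ (-(1 + α) / 2) := h
        _ = σ ^ (-(1 + α)) := by rw [Egen σ hσ]; congr 1; ring
  -- global bound
  have hbound0 : ∀ σ : ℝ, 0 < σ → |f σ| ≤ M * |σ| ^ (1 - α) := by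
    intro σ hσ
    obtain ⟨h0, h1⟩ := hK σ hσ
    have habs : |((σ ^ 2 + τ ^ 2) ^ (-(1 + α) / 2) : ℝ) - |σ| ^ (-(1 + α))| ≤ σ ^ (-(1 + α)) := by
      rw [abs_of_nonneg hσ.le, abs_sub_comm, abs_of_nonneg (by linarith)]
      have : (0:ℝ) ≤ σ ^ (-(1+α)) := Real.rpow_nonneg hσ.le _
      linarith
    calc |f σ| = |c σ| * |((σ ^ 2 + τ ^ 2) ^ (-(1 + α) / 2) : ℝ) - |σ| ^ (-(1 + α))| := by
          rw [hf]; exact abs_mul _ _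
      _ ≤ (M * σ ^ 2) * (σ ^ (-(1 + α))) := by
          apply mul_le_mul (hcq σ) habs (abs_nonneg _) (by positivity)
      _ = M * |σ| ^ (1 - α) := by
          rw [abs_of_nonneg hσ.le, mul_assoc, ← Real.rpow_natCast σ 2, ← Real.rpow_add hσ,
            show ((2:ℕ):ℝ) + -(1 + α) = 1 - α by push_cast; ring]
  -- bound away from 0
  have hker : ∀ σ : ℝ, τ ≤ σ →
      σ ^ (-(1 + α)) - ((σ ^ 2 + τ ^ 2) ^ (-(1 + α) / 2) : ℝ) ≤ τ ^ 2 * σ ^ (-(3 + α)) := by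
    intro σ hστ
    have hσ : 0 < σ := hτ.trans_le hστ
    have ha : (0:ℝ) < σ ^ 2 := by positivity
    have hat : (0:ℝ) < σ ^ 2 + τ ^ 2 := by positivity
    set p : ℝ := (1 + α) / 2 with hpdef
    have hp1 : p ≤ 1 := by rw [hpdef]; linarith
    have he : -(1 + α) / 2 = -p := by rw [hpdef]; ring
    have e1 : σ ^ (-(1 + α)) = ((σ ^ 2 : ℝ)) ^ (-p) := by
      rw [Egen σ hσ]; congr 1; rw [hpdef]; ring
    have e2 : σ ^ (-(3 + α)) = ((σ ^ 2 : ℝ)) ^ (-p - 1) := by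
      rw [Egen σ hσ]; congr 1; rw [hpdef]; ring
    rw [e1, e2, he]
    have key1 : ((σ ^ 2 + τ ^ 2 : ℝ)) ^ (-p) = (σ ^ 2) ^ (-p) * (σ ^ 2 / (σ ^ 2 + τ ^ 2)) ^ p := by
      rw [Real.div_rpow ha.le hat.le, Real.rpow_neg ha.le, Real.rpow_neg hat.le]
      field_simp
    have hr0 : 0 < σ ^ 2 / (σ ^ 2 + τ ^ 2) := by positivity
    have hr1 : σ ^ 2 / (σ ^ 2 + τ ^ 2) ≤ 1 := by
      rw [div_le_one hat]; nlinarith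
    have hrp : σ ^ 2 / (σ ^ 2 + τ ^ 2) ≤ (σ ^ 2 / (σ ^ 2 + τ ^ 2)) ^ p := by
      simpa [Real.rpow_one] using Real.rpow_le_rpow_of_exponent_ge hr0 hr1 hp1
    have hanneg : (0:ℝ) ≤ (σ ^ 2 : ℝ) ^ (-p) := Real.rpow_nonneg ha.le _
    calc (σ ^ 2 : ℝ) ^ (-p) - (σ ^ 2 + τ ^ 2) ^ (-p)
        = (σ ^ 2 : ℝ) ^ (-p) * (1 - (σ ^ 2 / (σ ^ 2 + τ ^ 2)) ^ p) := by rw [key1]; ring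
      _ ≤ (σ ^ 2 : ℝ) ^ (-p) * (1 - σ ^ 2 / (σ ^ 2 + τ ^ 2)) := by
          apply mul_le_mul_of_nonneg_left (by linarith) hanneg
      _ = (σ ^ 2 : ℝ) ^ (-p) * (τ ^ 2 / (σ ^ 2 + τ ^ 2)) := by
          congr 1; field_simp; ring
      _ ≤ (σ ^ 2 : ℝ) ^ (-p) * (τ ^ 2 / σ ^ 2) := by
          apply mul_le_mul_of_nonneg_left _ hanneg
          apply div_le_div_of_nonneg_left (by positivity) ha (by nlinarith)
      _ = τ ^ 2 * (σ ^ 2 : ℝ) ^ (-p - 1) := by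
          rw [show -p - 1 = -p + (-1) by ring, Real.rpow_add ha, Real.rpow_neg_one]
          ring
  have hbound1 : ∀ σ : ℝ, τ ≤ σ → |f σ| ≤ M * τ ^ 2 * σ ^ (-(1 + α)) := by
    intro σ hστ
    have hσ : 0 < σ := hτ.trans_le hστ
    obtain ⟨h0, h1⟩ := hK σ hσ
    have habs : |((σ ^ 2 + τ ^ 2) ^ (-(1 + α) / 2) : ℝ) - |σ| ^ (-(1 + α))|
        ≤ τ ^ 2 * σ ^ (-(3 + α)) := by
      rw [abs_of_nonneg hσ.le, abs_sub_comm, abs_of_nonneg (by linarith)]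
      exact hker σ hστ
    calc |f σ| = |c σ| * |((σ ^ 2 + τ ^ 2) ^ (-(1 + α) / 2) : ℝ) - |σ| ^ (-(1 + α))| := by
          rw [hf]; exact abs_mul _ _
      _ ≤ (M * σ ^ 2) * (τ ^ 2 * σ ^ (-(3 + α))) := by
          apply mul_le_mul (hcq σ) habs (abs_nonneg _) (by positivity)
      _ = M * τ ^ 2 * (σ ^ 2 * σ ^ (-(3 + α))) := by ring
      _ = M * τ ^ 2 * σ ^ (-(1 + α)) := by
          rw [← Real.rpow_natCast σ 2, ← Real.rpow_add hσ,
            show ((2:ℕ):ℝ) + -(3 + α) = -(1 + α) by push_cast; ring]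
  -- measurability
  have hmeas : ∀ a b : ℝ, AEStronglyMeasurable f (volume.restrict (Set.uIoc a b)) := by
    intro a b
    apply Measurable.aestronglyMeasurable
    rw [hf]; fun_prop
  -- dominating function near zero
  have hg1 : Continuous (fun σ : ℝ => M * |σ| ^ (1 - α)) := by
    apply continuous_const.mul
    exact continuous_abs.rpow_const (fun x => Or.inr (by linarith))
  have hint : IntervalIntegrable f volume 0 σ₀ := by
    apply (hg1.intervalIntegrable 0 σ₀).mono_fun (hmeas 0 σ₀)
    filter_upwards [ae_restrict_mem measurableSet_uIoc] with σ hσ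
    rw [Set.uIoc_of_le hσ₀0.le] at hσ
    rw [Real.norm_eq_abs, Real.norm_eq_abs,
      abs_of_nonneg (mul_nonneg hM (Real.rpow_nonneg (abs_nonneg σ) _))]
    exact hbound0 σ hσ.1
  have hsub1 : Set.uIcc (0:ℝ) τ ⊆ Set.uIcc 0 σ₀ := by
    rw [Set.uIcc_of_le hτ.le, Set.uIcc_of_le hσ₀0.le]
    exact Set.Icc_subset_Icc le_rfl hτσ.le
  have hsub2 : Set.uIcc τ σ₀ ⊆ Set.uIcc 0 σ₀ := by
    rw [Set.uIcc_of_le hτσ.le, Set.uIcc_of_le hσ₀0.le]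
    exact Set.Icc_subset_Icc hτ.le le_rfl
  have hint1 : IntervalIntegrable f volume 0 τ := hint.mono_set hsub1
  have hint2 : IntervalIntegrable f volume τ σ₀ := hint.mono_set hsub2
  refine ⟨hint, ?_⟩
  -- piece 1
  have hττ : τ ^ 2 * τ ^ (-α) = τ ^ (2 - α) := by
    rw [← Real.rpow_natCast τ 2, ← Real.rpow_add hτ,
      show ((2:ℕ):ℝ) + -α = 2 - α by push_cast; ring]
  have hτpos : (0:ℝ) ≤ τ ^ (2 - α) := Real.rpow_nonneg hτ.le _
  have hI1 : |∫ σ in (0:ℝ)..τ, f σ| ≤ M * τ ^ (2 - α) := by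
    have h1 : ‖∫ σ in (0:ℝ)..τ, f σ‖ ≤ |∫ σ in (0:ℝ)..τ, M * |σ| ^ (1 - α)| := by
      apply intervalIntegral.norm_integral_le_abs_of_norm_le _ (hg1.intervalIntegrable 0 τ)
      filter_upwards [ae_restrict_mem measurableSet_uIoc] with σ hσ
      rw [Set.uIoc_of_le hτ.le] at hσ
      rw [Real.norm_eq_abs]
      exact hbound0 σ hσ.1
    have h2 : (∫ σ in (0:ℝ)..τ, M * |σ| ^ (1 - α)) = M * (τ ^ (2 - α) / (2 - α)) := by
      rw [intervalIntegral.integral_const_mul]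
      congr 1
      have : (∫ σ in (0:ℝ)..τ, |σ| ^ (1 - α)) = ∫ σ in (0:ℝ)..τ, σ ^ (1 - α) := by
        apply intervalIntegral.integral_congr
        intro σ hσ
        rw [Set.uIcc_of_le hτ.le] at hσ
        simp [abs_of_nonneg hσ.1]
      rw [this, integral_rpow (Or.inl (by linarith))]
      rw [Real.zero_rpow (by linarith : (1:ℝ) - α + 1 ≠ 0)]
      rw [show (1:ℝ) - α + 1 = 2 - α by ring]
      ring
    rw [Real.norm_eq_abs] at h1
    calc |∫ σ in (0:ℝ)..τ, f σ| ≤ |M * (τ ^ (2 - α) / (2 - α))| := by rw [← h2]; exact h1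
      _ = M * (τ ^ (2 - α) / (2 - α)) := abs_of_nonneg (mul_nonneg hM (div_nonneg hτpos (by linarith)))
      _ ≤ M * τ ^ (2 - α) := by
          apply mul_le_mul_of_nonneg_left _ hM
          apply div_le_self hτpos (by linarith)
  -- piece 2
  have hI2 : |∫ σ in τ..σ₀, f σ| ≤ (1/α) * M * τ ^ (2 - α) := by
    have hg2 : IntervalIntegrable (fun σ : ℝ => M * τ ^ 2 * σ ^ (-(1 + α))) volume τ σ₀ := by
      apply ContinuousOn.intervalIntegrable
      apply ContinuousOn.mul continuousOn_const
      apply ContinuousOn.rpow_const continuousOn_id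
      intro x hx
      rw [Set.uIcc_of_le hτσ.le] at hx
      exact Or.inl (by simp; linarith [hx.1])
    have h1 : ‖∫ σ in τ..σ₀, f σ‖ ≤ |∫ σ in τ..σ₀, M * τ ^ 2 * σ ^ (-(1 + α))| := by
      apply intervalIntegral.norm_integral_le_abs_of_norm_le _ hg2
      filter_upwards [ae_restrict_mem measurableSet_uIoc] with σ hσ
      rw [Set.uIoc_of_le hτσ.le] at hσ
      rw [Real.norm_eq_abs]
      exact hbound1 σ hσ.1.le
    have h2 : (∫ σ in τ..σ₀, M * τ ^ 2 * σ ^ (-(1 + α)))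
        = M * τ ^ 2 * ((τ ^ (-α) - σ₀ ^ (-α)) / α) := by
      rw [intervalIntegral.integral_const_mul]
      congr 1
      rw [integral_rpow (Or.inr ⟨by intro h; rw [neg_eq_iff_eq_neg] at h; nlinarith [h], by
        rw [Set.uIcc_of_le hτσ.le]
        intro h
        exact absurd h.1 (by linarith)⟩)]
      rw [show -(1 + α) + 1 = -α by ring, div_neg, ← neg_div, neg_sub]
    have h3 : (0:ℝ) ≤ τ ^ (-α) - σ₀ ^ (-α) := by
      have := Real.rpow_le_rpow_of_nonpos hτ hτσ.le (by linarith : -α ≤ 0)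
      linarith
    rw [Real.norm_eq_abs] at h1
    calc |∫ σ in τ..σ₀, f σ| ≤ |M * τ ^ 2 * ((τ ^ (-α) - σ₀ ^ (-α)) / α)| := by
          rw [← h2]; exact h1
      _ = M * τ ^ 2 * ((τ ^ (-α) - σ₀ ^ (-α)) / α) := abs_of_nonneg (by positivity)
      _ ≤ M * τ ^ 2 * (τ ^ (-α) / α) := by
          apply mul_le_mul_of_nonneg_left _ (mul_nonneg hM (by positivity))
          exact (div_le_div_iff_of_pos_right hα).mpr (by linarith [Real.rpow_nonneg hσ₀0.le (-α)])
      _ = (1/α) * M * τ ^ (2 - α) := by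
          rw [← hττ]; ring
  have hsplit : (∫ σ in (0:ℝ)..σ₀, f σ)
      = (∫ σ in (0:ℝ)..τ, f σ) + ∫ σ in τ..σ₀, f σ :=
    (intervalIntegral.integral_add_adjacent_intervals hint1 hint2).symm
  calc |∫ σ in (0:ℝ)..σ₀, f σ| ≤ |∫ σ in (0:ℝ)..τ, f σ| + |∫ σ in τ..σ₀, f σ| := by
        rw [hsplit]; exact abs_add_le _ _
    _ ≤ M * τ ^ (2 - α) + (1/α) * M * τ ^ (2 - α) := add_le_add hI1 hI2
    _ = (1 + 1/α) * M * τ ^ (2 - α) := by ring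

theorem stmt9 (α σ₀ M : ℝ) (hα : 0 < α) (hα1 : α < 1) (hσ₀ : 0 < σ₀) (hM : 0 ≤ M)
    (b : ℝ → ℝ) (hb : ContDiff ℝ 2 b) (hb0 : b 0 = 0) (hb'0 : deriv b 0 = 0)
    (hbM : ∀ x, |deriv (deriv b) x| ≤ M) :
    ∃ C > 0, ∃ τ₁ > 0, ∀ τ : ℝ, 0 < τ → τ < τ₁ →
      |∫ σ in (-σ₀)..σ₀,
          b σ * (((σ ^ 2 + τ ^ 2) ^ (-(1 + α) / 2) : ℝ) - |σ| ^ (-(1 + α)))|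
        ≤ C * M * τ ^ (2 - α) := by
  refine ⟨2 * (1 + 1/α), by positivity, σ₀, hσ₀, fun τ hτ0 hτσ => ?_⟩
  have quad := stmt9_quad M b hb hb0 hb'0 hbM
  set f : ℝ → ℝ :=
    fun σ => b σ * (((σ ^ 2 + τ ^ 2) ^ (-(1 + α) / 2) : ℝ) - |σ| ^ (-(1 + α))) with hfdef
  obtain ⟨hintP, hbdP⟩ := stmt9_key α τ σ₀ M hα hα1 hτ0 hτσ hM b hb.continuous quad
  have hquadneg : ∀ x : ℝ, |b (-x)| ≤ M * x ^ 2 := fun x => by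
    simpa [neg_sq] using quad (-x)
  obtain ⟨hintN', hbdN⟩ := stmt9_key α τ σ₀ M hα hα1 hτ0 hτσ hM (fun σ => b (-σ))
    (hb.continuous.comp continuous_neg) hquadneg
  have hfneg : (fun σ : ℝ => f (-σ))
      = fun σ : ℝ => b (-σ) * (((σ ^ 2 + τ ^ 2) ^ (-(1 + α) / 2) : ℝ) - |σ| ^ (-(1 + α))) := by
    funext σ
    rw [hfdef]
    simp only [neg_sq, abs_neg]
  have hintN : IntervalIntegrable f volume (-σ₀) 0 := by
    have h := (IntervalIntegrable.iff_comp_neg (f := f) (a := -σ₀) (b := 0)).mpr ?_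
    · exact h
    · rw [hfneg]
      simpa using hintN'.symm
  have hvalN : (∫ σ in (-σ₀)..(0:ℝ), f σ) = ∫ σ in (0:ℝ)..σ₀,
      b (-σ) * (((σ ^ 2 + τ ^ 2) ^ (-(1 + α) / 2) : ℝ) - |σ| ^ (-(1 + α))) := by
    rw [← hfneg, intervalIntegral.integral_comp_neg (f := f)]
    norm_num
  have hsplit : (∫ σ in (-σ₀)..σ₀, f σ)
      = (∫ σ in (-σ₀)..(0:ℝ), f σ) + ∫ σ in (0:ℝ)..σ₀, f σ :=
    (intervalIntegral.integral_add_adjacent_intervals hintN hintP).symm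
  calc |∫ σ in (-σ₀)..σ₀, f σ|
      ≤ |∫ σ in (-σ₀)..(0:ℝ), f σ| + |∫ σ in (0:ℝ)..σ₀, f σ| := by
        rw [hsplit]; exact abs_add_le _ _
    _ ≤ (1 + 1/α) * M * τ ^ (2 - α) + (1 + 1/α) * M * τ ^ (2 - α) := by
        apply add_le_add _ hbdP
        rw [hvalN]
        exact hbdN
    _ = 2 * (1 + 1/α) * M * τ ^ (2 - α) := by ring
end
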